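/- Let $g(t_1,t_2) = t_1 t_2 \log(\mu_1 + t_1)\log(\mu_2 + t_2)$ with constants $\mu_1,\mu_2 > 1$. Then $\sup_{(u,v)\in[0,1]^2} \left|\frac{g(Tu,Tv)}{g(T,T)} - uv\right| \to 0$ as $T \to \infty$, i.e., $g$ satisfies Assumption 3 with $g^*(u,v) = uv$. -/

import Mathlib

open Set

lemma aux_key_14 (μ T u : ℝ) (hμ : 1 < μ) (hT : 1 ≤ T) (hu0 : 0 ≤ u) (hu1 : u ≤ 1) :
    u * (Real.log (μ + T) - Real.log (μ + T * u)) ≤ 1 := by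
  rcases eq_or_lt_of_le hu0 with h | h
  · simp [← h]
  · have hμT : 0 < μ + T := by linarith
    have h1 : u * (μ + T) ≤ μ + T * u := by nlinarith
    have h2 : Real.log (u * (μ + T)) ≤ Real.log (μ + T * u) := by
      apply Real.log_le_log (by positivity) h1
    rw [Real.log_mul (ne_of_gt h) (ne_of_gt hμT)] at h2
    have h3 : -Real.log u ≤ 1 / u - 1 := by
      have := Real.log_le_sub_one_of_pos (x := u⁻¹) (by positivity)
      rw [Real.log_inv] at this
      simpa [one_div] using this
    have h4 : Real.log (μ + T) - Real.log (μ + T * u) ≤ -Real.log u := by linarith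
    calc u * (Real.log (μ + T) - Real.log (μ + T * u)) ≤ u * (-Real.log u) :=
          mul_le_mul_of_nonneg_left h4 hu0
      _ ≤ u * (1 / u - 1) := mul_le_mul_of_nonneg_left h3 hu0
      _ = 1 - u := by field_simp
      _ ≤ 1 := by linarith

set_option maxHeartbeats 1000000 in
theorem stmt_14 (μ₁ μ₂ : ℝ) (h₁ : 1 < μ₁) (h₂ : 1 < μ₂)
    (g : ℝ → ℝ → ℝ)
    (hg : ∀ t₁ t₂ : ℝ, g t₁ t₂ = t₁ * t₂ * Real.log (μ₁ + t₁) * Real.log (μ₂ + t₂)) :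
    ∀ ε > 0, ∃ T₀ : ℝ, ∀ T ≥ T₀, ∀ u ∈ Icc (0:ℝ) 1, ∀ v ∈ Icc (0:ℝ) 1,
      |g (T * u) (T * v) / g T T - u * v| < ε := by
  intro ε hε
  refine ⟨Real.exp (2 / ε), fun T hT u hu v hv => ?_⟩
  obtain ⟨hu0, hu1⟩ := hu
  obtain ⟨hv0, hv1⟩ := hv
  have hexp : (1:ℝ) ≤ Real.exp (2 / ε) := Real.one_le_exp (by positivity)
  have hT1 : 1 ≤ T := le_trans hexp hT
  have hT0 : 0 < T := by linarith
  set L₁ := Real.log (μ₁ + T) with hL₁def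
  set L₂ := Real.log (μ₂ + T) with hL₂def
  set l₁ := Real.log (μ₁ + T * u) with hl₁def
  set l₂ := Real.log (μ₂ + T * v) with hl₂def
  have hL₁ : 2 / ε < L₁ := by
    calc 2 / ε = Real.log (Real.exp (2 / ε)) := (Real.log_exp _).symm
      _ < L₁ := Real.log_lt_log (Real.exp_pos _) (by linarith)
  have hL₂ : 2 / ε < L₂ := by
    calc 2 / ε = Real.log (Real.exp (2 / ε)) := (Real.log_exp _).symm
      _ < L₂ := Real.log_lt_log (Real.exp_pos _) (by linarith)
  have hL₁0 : 0 < L₁ := lt_trans (by positivity) hL₁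
  have hL₂0 : 0 < L₂ := lt_trans (by positivity) hL₂
  have hl₁0 : 0 ≤ l₁ := Real.log_nonneg (by nlinarith)
  have hl₂0 : 0 ≤ l₂ := Real.log_nonneg (by nlinarith)
  have hl₁L : l₁ ≤ L₁ := Real.log_le_log (by nlinarith) (by nlinarith)
  have hl₂L : l₂ ≤ L₂ := Real.log_le_log (by nlinarith) (by nlinarith)
  have key1 : u * (L₁ - l₁) ≤ 1 := aux_key_14 μ₁ T u h₁ hT1 hu0 hu1
  have key2 : v * (L₂ - l₂) ≤ 1 := aux_key_14 μ₂ T v h₂ hT1 hv0 hv1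
  have hA : g (T * u) (T * v) / g T T - u * v
      = (u * v * l₁ * l₂ - u * v * L₁ * L₂) / (L₁ * L₂) := by
    rw [hg, hg, ← hl₁def, ← hl₂def, ← hL₁def, ← hL₂def]
    field_simp
  have hnum : u * v * l₁ * l₂ - u * v * L₁ * L₂ ≤ 0 := by
    have hll : l₁ * l₂ ≤ L₁ * L₂ := mul_le_mul hl₁L hl₂L hl₂0 hL₁0.le
    nlinarith [mul_nonneg hu0 hv0, hll]
  have habs : |g (T * u) (T * v) / g T T - u * v|
      = (u * v * L₁ * L₂ - u * v * l₁ * l₂) / (L₁ * L₂) := by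
    rw [hA, abs_div, abs_of_nonpos hnum, abs_of_pos (mul_pos hL₁0 hL₂0)]
    ring
  have hclaim : u * v * L₁ * L₂ - u * v * l₁ * l₂ ≤ L₂ + L₁ := by
    have c1 : v * (u * (L₁ - l₁)) ≤ 1 :=
      mul_le_one₀ hv1 (mul_nonneg hu0 (by linarith)) key1
    have c2 : u * l₁ ≤ L₁ := by nlinarith
    have t1 : v * (u * (L₁ - l₁)) * L₂ ≤ L₂ := by
      have := mul_le_mul_of_nonneg_right c1 (le_of_lt hL₂0)
      linarith
    have t2 : (u * l₁) * (v * (L₂ - l₂)) ≤ L₁ := by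
      calc (u * l₁) * (v * (L₂ - l₂)) ≤ L₁ * 1 :=
            mul_le_mul c2 key2 (mul_nonneg hv0 (by linarith)) (le_of_lt hL₁0)
        _ = L₁ := mul_one L₁
    linarith [t1, t2]
  have h1 : 1 / L₁ < ε / 2 := by
    rw [div_lt_div_iff₀ hL₁0 (by norm_num : (0:ℝ) < 2)]
    have := (div_lt_iff₀ hε).mp hL₁
    linarith
  have h2 : 1 / L₂ < ε / 2 := by
    rw [div_lt_div_iff₀ hL₂0 (by norm_num : (0:ℝ) < 2)]
    have := (div_lt_iff₀ hε).mp hL₂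
    linarith
  calc |g (T * u) (T * v) / g T T - u * v|
      = (u * v * L₁ * L₂ - u * v * l₁ * l₂) / (L₁ * L₂) := habs
    _ ≤ (L₂ + L₁) / (L₁ * L₂) := by gcongr
    _ = 1 / L₁ + 1 / L₂ := by field_simp
    _ < ε := by linarith
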